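/- Let B, Ē, vₙ, v_{n+1} ∈ ℝ³, α ∈ ℝ, and Δt ∈ ℝ with Δt ≠ 0. Define v⁻ := vₙ + (α Δt / 2) · Ē and v⁺ := v_{n+1} − (α Δt / 2) · Ē. Then the implicit velocity-Verlet update equation (v_{n+1} − vₙ)/Δt = α · (Ē + ((v_{n+1} + vₙ)/2) × B) holds if and only if (v⁺ − v⁻)/Δt = (α/2) · ((v⁺ + v⁻) × B). That is, the substitution of v± separates the electric and magnetic forces and reduces the implicit velocity update to a pure rotation equation. -/

import Mathlib

/-- The cross product on `EuclideanSpace ℝ (Fin 3)`. -/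
noncomputable def cross3 (a b : EuclideanSpace ℝ (Fin 3)) : EuclideanSpace ℝ (Fin 3) :=
  WithLp.toLp 2 (crossProduct (a : Fin 3 → ℝ) (b : Fin 3 → ℝ) : Fin 3 → ℝ)

lemma cross3_smul_left (c : ℝ) (a b : EuclideanSpace ℝ (Fin 3)) :
    cross3 (c • a) b = c • cross3 a b := by
  show WithLp.toLp 2 (crossProduct (c • (a : Fin 3 → ℝ)) (b : Fin 3 → ℝ) : Fin 3 → ℝ) = _
  rw [map_smul]
  rfl

/-- With `v⁻ := vₙ + (αΔt/2) Ē` and `v⁺ := v_{n+1} − (αΔt/2) Ē`, the implicit velocity-Verlet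
update `(v_{n+1} − vₙ)/Δt = α (Ē + ((v_{n+1} + vₙ)/2) × B)` holds if and only if the pure
rotation equation `(v⁺ − v⁻)/Δt = (α/2) ((v⁺ + v⁻) × B)` holds. -/
theorem boris_substitution_separates_forces
    (B E vn vn1 : EuclideanSpace ℝ (Fin 3)) (α Δt : ℝ) (hΔt : Δt ≠ 0)
    (vminus vplus : EuclideanSpace ℝ (Fin 3))
    (hvm : vminus = vn + (α * Δt / 2) • E)
    (hvp : vplus = vn1 - (α * Δt / 2) • E) :
    (Δt⁻¹ • (vn1 - vn) = α • (E + cross3 ((1 / 2 : ℝ) • (vn1 + vn)) B)) ↔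
      (Δt⁻¹ • (vplus - vminus) = (α / 2) • cross3 (vplus + vminus) B) := by
  subst hvm hvp
  have h1 : vn1 - (α * Δt / 2) • E - (vn + (α * Δt / 2) • E)
      = vn1 - vn - (α * Δt) • E := by module
  have h2 : vn1 - (α * Δt / 2) • E + (vn + (α * Δt / 2) • E) = vn1 + vn := by module
  have key : Δt⁻¹ • (vn1 - vn - (α * Δt) • E) = Δt⁻¹ • (vn1 - vn) - α • E := by
    match_scalars <;> field_simp
  rw [h1, h2, cross3_smul_left, key, sub_eq_iff_eq_add]
  constructor <;> intro h <;> rw [h] <;> module
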